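/- Let f : ℝⁿ → ℝ be convex and differentiable with ∇f Lipschitz of constant r > 0. Then there exists a proper lsc convex function g : ℝⁿ → ℝ ∪ {∞} such that f = e_r g. Conversely, if f = e_r g for some proper lsc convex g, then ∇f is r-Lipschitz. -/

import Mathlib

set_option maxHeartbeats 1000000

open scoped RealInnerProductSpace

abbrev Euc (n : ℕ) := EuclideanSpace ℝ (Fin n)

noncomputable def moreauEnv {E : Type*} [NormedAddCommGroup E] [InnerProductSpace ℝ E]
    (r : ℝ) (f : E → EReal) (x : E) : EReal :=
  ⨅ y : E, f y + ((r / 2 * ‖y - x‖ ^ 2 : ℝ) : EReal)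

noncomputable def fenchel {E : Type*} [NormedAddCommGroup E] [InnerProductSpace ℝ E]
    (f : E → EReal) (y : E) : EReal :=
  ⨆ x : E, ((⟪y, x⟫ : ℝ) : EReal) - f x

def ProperFn {E : Type*} (f : E → EReal) : Prop :=
  (∃ x, f x ≠ ⊤) ∧ ∀ x, f x ≠ ⊥

def EConvexFn {E : Type*} [AddCommGroup E] [Module ℝ E] (f : E → EReal) : Prop :=
  ∀ x y : E, ∀ a b : ℝ, 0 ≤ a → 0 ≤ b → a + b = 1 →
    f (a • x + b • y) ≤ (a : EReal) * f x + (b : EReal) * f y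

def SymRel {n : ℕ} (A : Set (Euc n × Euc n)) : Prop :=
  ∀ p ∈ A, ∀ q ∈ A, ⟪p.1, q.2⟫ = ⟪q.1, p.2⟫

def MonoRel {n : ℕ} (A : Set (Euc n × Euc n)) : Prop :=
  ∀ p ∈ A, ∀ q ∈ A, 0 ≤ ⟪p.1 - q.1, p.2 - q.2⟫

def MaxMonoRel {n : ℕ} (A : Set (Euc n × Euc n)) : Prop :=
  MonoRel A ∧ ∀ p : Euc n × Euc n, (∀ q ∈ A, 0 ≤ ⟪p.1 - q.1, p.2 - q.2⟫) → p ∈ A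

noncomputable def qrel {n : ℕ} (A : Set (Euc n × Euc n)) (x : Euc n) : EReal :=
  ⨅ (u : Euc n) (_ : (x, u) ∈ A), ((1 / 2 * ⟪x, u⟫ : ℝ) : EReal)

def esubdiff {E : Type*} [NormedAddCommGroup E] [InnerProductSpace ℝ E]
    (f : E → EReal) (x : E) : Set E :=
  {u | ∀ y, f x + ((⟪u, y - x⟫ : ℝ) : EReal) ≤ f y}

section helpers

variable {n : ℕ}

lemma hasDerivAt_line (f : Euc n → ℝ) (hdiff : Differentiable ℝ f) (x v : Euc n) (t : ℝ) :
    HasDerivAt (fun s : ℝ => f (x + s • v)) ⟪gradient f (x + t • v), v⟫ t := by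
  have h1 : HasFDerivAt f (InnerProductSpace.toDual ℝ (Euc n) (gradient f (x + t • v)))
      (x + t • v) := (hdiff _).hasGradientAt.hasFDerivAt
  have h2 : HasDerivAt (fun s : ℝ => x + s • v) v t := by
    simpa using ((hasDerivAt_id t).smul_const v).const_add x
  have := h1.comp_hasDerivAt t h2
  rw [InnerProductSpace.toDual_apply_apply] at this
  exact this

lemma subgrad (f : Euc n → ℝ) (hconv : ConvexOn ℝ Set.univ f) (hdiff : Differentiable ℝ f)
    (x y : Euc n) : f x + ⟪gradient f x, y - x⟫ ≤ f y := by
  have hφ : ConvexOn ℝ Set.univ (fun t : ℝ => f (x + t • (y - x))) := by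
    have h := hconv.comp_affineMap (AffineMap.lineMap x y)
    have he : (fun t : ℝ => f (x + t • (y - x))) = f ∘ (AffineMap.lineMap x y) := by
      funext t; simp [AffineMap.lineMap_apply, add_comm]
    rw [he]; simpa using h
  have hd0 : HasDerivAt (fun t : ℝ => f (x + t • (y - x))) ⟪gradient f x, y - x⟫ 0 := by
    have := hasDerivAt_line f hdiff x (y - x) 0
    convert this using 2
    simp
  have hs := hφ.le_slope_of_hasDerivAt (Set.mem_univ (0:ℝ)) (Set.mem_univ (1:ℝ)) one_pos hd0
  rw [slope_def_field] at hs
  simp only [one_smul, zero_smul, add_zero, add_sub_cancel] at hs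
  linarith

lemma descent_of_lip (f : Euc n → ℝ) (hdiff : Differentiable ℝ f) (r : ℝ)
    (hl : ∀ a b : Euc n, ‖gradient f a - gradient f b‖ ≤ r * ‖a - b‖) (x y : Euc n) :
    f y ≤ f x + ⟪gradient f x, y - x⟫ + r / 2 * ‖y - x‖ ^ 2 := by
  set v := y - x with hv
  set c1 : ℝ := ⟪gradient f x, v⟫ with hc1
  set c2 : ℝ := r / 2 * ‖v‖ ^ 2 with hc2
  set χ : ℝ → ℝ := fun t => f (x + t • v) - (c1 * t + c2 * t ^ 2) with hχ
  have hχd : ∀ t : ℝ, HasDerivAt χ (⟪gradient f (x + t • v), v⟫ - (c1 * 1 + c2 * (2 * t ^ 1))) t := by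
    intro t
    exact (hasDerivAt_line f hdiff x v t).sub
      (((hasDerivAt_id t).const_mul c1).add ((hasDerivAt_pow 2 t).const_mul c2))
  have hanti : AntitoneOn χ (Set.Icc (0:ℝ) 1) := by
    apply antitoneOn_of_deriv_nonpos (convex_Icc 0 1)
    · exact (fun t _ => ((hχd t).differentiableAt.continuousAt.continuousWithinAt))
    · exact fun t _ => ((hχd t).differentiableAt.differentiableWithinAt)
    · intro t ht
      rw [interior_Icc] at ht
      rw [(hχd t).deriv]
      have h1 : ⟪gradient f (x + t • v), v⟫ - c1 = ⟪gradient f (x + t • v) - gradient f x, v⟫ := by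
        rw [inner_sub_left]
      have h2 : ‖gradient f (x + t • v) - gradient f x‖ ≤ r * (t * ‖v‖) := by
        have := hl (x + t • v) x
        simpa [norm_smul, abs_of_pos ht.1] using this
      have h3 : ⟪gradient f (x + t • v) - gradient f x, v⟫ ≤ r * (t * ‖v‖) * ‖v‖ :=
        le_trans (real_inner_le_norm _ _) (by
          have := mul_le_mul_of_nonneg_right h2 (norm_nonneg v)
          linarith)
      have hc2t : c2 * (2 * t ^ 1) = r * (t * ‖v‖) * ‖v‖ := by rw [hc2]; ring
      linarith [h1 ▸ h3]
  have := hanti (Set.left_mem_Icc.2 zero_le_one) (Set.right_mem_Icc.2 zero_le_one) zero_le_one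
  simp only [hχ] at this
  have e0 : x + (0:ℝ) • v = x := by simp
  have e1 : x + (1:ℝ) • v = y := by simp [hv]
  rw [e0, e1] at this
  simp only [hc1, hc2] at this ⊢
  nlinarith [this]

lemma coco (f : Euc n → ℝ) (r : ℝ) (hr : 0 < r)
    (hsub : ∀ x y : Euc n, f x + ⟪gradient f x, y - x⟫ ≤ f y)
    (hdes : ∀ x y : Euc n, f y ≤ f x + ⟪gradient f x, y - x⟫ + r / 2 * ‖y - x‖ ^ 2)
    (x z : Euc n) :
    f z + ⟪gradient f z, x - z⟫ + 1 / (2 * r) * ‖gradient f x - gradient f z‖ ^ 2 ≤ f x := by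
  set u := gradient f x with hu
  set v := gradient f z with hvdef
  set p := x - (1 / r) • (u - v) with hp
  have h1 := hsub z p
  have h2 := hdes x p
  have e1 : p - z = (x - z) - (1 / r) • (u - v) := by rw [hp]; abel
  have e2 : p - x = -((1 / r) • (u - v)) := by rw [hp]; abel
  rw [e1, inner_sub_right, real_inner_smul_right] at h1
  rw [e2, inner_neg_right, real_inner_smul_right, norm_neg, norm_smul, Real.norm_eq_abs,
    abs_of_pos (by positivity : (0:ℝ) < 1 / r)] at h2
  have hiuv : ⟪u, u - v⟫ - ⟪v, u - v⟫ = ‖u - v‖ ^ 2 := by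
    rw [← inner_sub_left, real_inner_self_eq_norm_sq]
  have hiuv' : 1 / r * ⟪u, u - v⟫ - 1 / r * ⟪v, u - v⟫ = 1 / r * ‖u - v‖ ^ 2 := by
    linear_combination (1 / r) * hiuv
  have hq : r / 2 * (1 / r * ‖u - v‖) ^ 2 = 1 / (2 * r) * ‖u - v‖ ^ 2 := by
    field_simp
  rw [hq] at h2
  have hN : 1 / r * ‖u - v‖ ^ 2 = 2 * (1 / (2 * r) * ‖u - v‖ ^ 2) := by ring
  linarith

lemma lip_of_coco (f : Euc n → ℝ) (r : ℝ) (hr : 0 < r)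
    (hco : ∀ x z : Euc n,
      f z + ⟪gradient f z, x - z⟫ + 1 / (2 * r) * ‖gradient f x - gradient f z‖ ^ 2 ≤ f x) :
    LipschitzWith (Real.toNNReal r) (fun x => gradient f x) := by
  refine LipschitzWith.of_dist_le_mul fun x z => ?_
  rw [dist_eq_norm, dist_eq_norm, Real.coe_toNNReal r hr.le]
  have h1 := hco x z
  have h2 := hco z x
  rw [norm_sub_rev (gradient f z)] at h2
  have e1 : ⟪gradient f x, z - x⟫ = -⟪gradient f x, x - z⟫ := by
    rw [← inner_neg_right]; congr 1; abel
  rw [e1] at h2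
  have hsum : 1 / r * ‖gradient f x - gradient f z‖ ^ 2
      ≤ ⟪gradient f x, x - z⟫ - ⟪gradient f z, x - z⟫ := by
    have : 1 / r * ‖gradient f x - gradient f z‖ ^ 2
        = 2 * (1 / (2 * r) * ‖gradient f x - gradient f z‖ ^ 2) := by ring
    linarith
  rw [← inner_sub_left] at hsum
  have hcs := real_inner_le_norm (gradient f x - gradient f z) (x - z)
  rcases eq_or_lt_of_le (norm_nonneg (gradient f x - gradient f z)) with h0 | hpos
  · rw [← h0]; positivity
  · have h3 : 1 / r * ‖gradient f x - gradient f z‖ ^ 2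
        ≤ ‖gradient f x - gradient f z‖ * ‖x - z‖ := le_trans hsum hcs
    rw [div_mul_eq_mul_div, one_mul, div_le_iff₀ hr] at h3
    nlinarith [h3, hpos]

end helpers

theorem stmt18 {n : ℕ} (r : ℝ) (hr : 0 < r) (f : Euc n → ℝ)
    (hconv : ConvexOn ℝ Set.univ f) (hdiff : Differentiable ℝ f) :
    LipschitzWith (Real.toNNReal r) (fun x => gradient f x)
      ↔ ∃ g : Euc n → EReal, ProperFn g ∧ LowerSemicontinuous g ∧ EConvexFn g ∧
          ∀ x : Euc n, ((f x : ℝ) : EReal) = moreauEnv r g x := by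
  have hsub := subgrad f hconv hdiff
  constructor
  · -- forward
    intro hlip
    have hl : ∀ a b : Euc n, ‖gradient f a - gradient f b‖ ≤ r * ‖a - b‖ := by
      intro a b
      have := hlip.dist_le_mul a b
      rwa [dist_eq_norm, dist_eq_norm, Real.coe_toNNReal r hr.le] at this
    have hdes := descent_of_lip f hdiff r hl
    have hco := coco f r hr hsub hdes
    set A : Euc n → Euc n → ℝ :=
      fun z y => f z + ⟪gradient f z, y - z⟫ + 1 / (2 * r) * ‖gradient f z‖ ^ 2 with hA
    set g : Euc n → EReal := fun y => ⨆ z, ((A z y : ℝ) : EReal) with hg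
    -- fact1 : envelope lower bound term
    have fact1 : ∀ x y : Euc n, f x ≤ A x y + r / 2 * ‖y - x‖ ^ 2 := by
      intro x y
      set u := gradient f x with hu
      have hexp : 1 / (2 * r) * ‖u + r • (y - x)‖ ^ 2
          = 1 / (2 * r) * ‖u‖ ^ 2 + ⟪u, y - x⟫ + r / 2 * ‖y - x‖ ^ 2 := by
        rw [norm_add_sq_real, real_inner_smul_right, norm_smul, Real.norm_eq_abs,
          abs_of_pos hr]
        field_simp
      have hpos : 0 ≤ 1 / (2 * r) * ‖u + r • (y - x)‖ ^ 2 := by positivity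
      simp only [hA]
      linarith [hexp ▸ hpos]
    -- fact2 : upper bound at the prox point
    have fact2 : ∀ x z : Euc n,
        A z (x - (1 / r) • gradient f x) ≤ f x - 1 / (2 * r) * ‖gradient f x‖ ^ 2 := by
      intro x z
      have h := hco x z
      have e1 : (x - (1 / r) • gradient f x) - z = (x - z) - (1 / r) • gradient f x := by abel
      simp only [hA]
      rw [e1, inner_sub_right, real_inner_smul_right]
      have hn : ‖gradient f x - gradient f z‖ ^ 2
          = ‖gradient f x‖ ^ 2 - 2 * ⟪gradient f x, gradient f z⟫ + ‖gradient f z‖ ^ 2 :=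
        norm_sub_sq_real _ _
      have hcm : ⟪gradient f z, gradient f x⟫ = ⟪gradient f x, gradient f z⟫ :=
        real_inner_comm _ _
      have hq : 1 / (2 * r) * ‖gradient f x - gradient f z‖ ^ 2
          = 1 / (2 * r) * ‖gradient f x‖ ^ 2 - 1 / r * ⟪gradient f x, gradient f z⟫
            + 1 / (2 * r) * ‖gradient f z‖ ^ 2 := by
        rw [hn]; field_simp
      have hcm' : 1 / r * ⟪gradient f z, gradient f x⟫
          = 1 / r * ⟪gradient f x, gradient f z⟫ := by linear_combination (1 / r) * hcm
      rw [hq] at h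
      linarith [hcm']
    refine ⟨g, ⟨⟨(0 : Euc n) - (1 / r) • gradient f 0, ?_⟩, ?_⟩, ?_, ?_, ?_⟩
    · -- not ⊤
      have : g ((0:Euc n) - (1 / r) • gradient f 0)
          ≤ ((f 0 - 1 / (2 * r) * ‖gradient f 0‖ ^ 2 : ℝ) : EReal) :=
        iSup_le fun z => EReal.coe_le_coe_iff.2 (fact2 0 z)
      exact ne_top_of_le_ne_top (EReal.coe_ne_top _) this
    · -- not ⊥
      intro x
      exact ((EReal.bot_lt_coe (A 0 x)).trans_le (le_iSup (fun z => ((A z x : ℝ) : EReal)) 0)).ne'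
    · -- lsc
      apply lowerSemicontinuous_iSup
      intro z
      apply Continuous.lowerSemicontinuous
      apply continuous_coe_real_ereal.comp
      exact (continuous_const.add ((continuous_const.inner
        (continuous_id.sub continuous_const)))).add continuous_const
    · -- convex
      intro x y a b ha hb hab
      rcases eq_or_lt_of_le ha with h0 | hapos
      · have hb1 : b = 1 := by linarith
        subst hb1
        rw [← h0]
        simp [one_mul, EReal.zero_mul]
      rcases eq_or_lt_of_le hb with h0 | hbpos
      · have ha1 : a = 1 := by linarith
        subst ha1
        rw [← h0]
        simp [one_mul, EReal.zero_mul]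
      refine iSup_le fun z => ?_
      have haff : A z (a • x + b • y) = a * A z x + b * A z y := by
        have hz : a • x + b • y - z = a • (x - z) + b • (y - z) := by
          have hzz : z = a • z + b • z := by rw [← add_smul, hab, one_smul]
          rw [smul_sub, smul_sub]
          conv_lhs => rw [hzz]
          abel
        simp only [hA]
        rw [hz, inner_add_right, real_inner_smul_right, real_inner_smul_right]
        linear_combination (-(f z + 1 / (2 * r) * ‖gradient f z‖ ^ 2)) * hab
      calc ((A z (a • x + b • y) : ℝ) : EReal)
          = (a : EReal) * ((A z x : ℝ) : EReal) + (b : EReal) * ((A z y : ℝ) : EReal) := by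
            rw [haff, EReal.coe_add, EReal.coe_mul, EReal.coe_mul]
        _ ≤ (a : EReal) * g x + (b : EReal) * g y := by
            apply add_le_add
            · exact mul_le_mul_of_nonneg_left (le_iSup (fun z => ((A z x : ℝ) : EReal)) z)
                (by exact_mod_cast ha)
            · exact mul_le_mul_of_nonneg_left (le_iSup (fun z => ((A z y : ℝ) : EReal)) z)
                (by exact_mod_cast hb)
    · -- envelope identity
      intro x
      unfold moreauEnv
      apply le_antisymm
      · refine le_iInf fun y => ?_
        calc ((f x : ℝ) : EReal)
            ≤ ((A x y + r / 2 * ‖y - x‖ ^ 2 : ℝ) : EReal) := EReal.coe_le_coe_iff.2 (fact1 x y)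
          _ = ((A x y : ℝ) : EReal) + ((r / 2 * ‖y - x‖ ^ 2 : ℝ) : EReal) := EReal.coe_add _ _
          _ ≤ g y + ((r / 2 * ‖y - x‖ ^ 2 : ℝ) : EReal) :=
              add_le_add_left (le_iSup (fun z => ((A z y : ℝ) : EReal)) x) _
      · set y₀ := x - (1 / r) • gradient f x with hy₀
        refine iInf_le_of_le y₀ ?_
        have hsle : g y₀ ≤ ((f x - 1 / (2 * r) * ‖gradient f x‖ ^ 2 : ℝ) : EReal) :=
          iSup_le fun z => EReal.coe_le_coe_iff.2 (fact2 x z)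
        have hnorm : r / 2 * ‖y₀ - x‖ ^ 2 = 1 / (2 * r) * ‖gradient f x‖ ^ 2 := by
          have e : y₀ - x = -((1 / r) • gradient f x) := by rw [hy₀]; abel
          rw [e, norm_neg, norm_smul, Real.norm_eq_abs, abs_of_pos (by positivity : (0:ℝ) < 1/r)]
          field_simp
        calc g y₀ + ((r / 2 * ‖y₀ - x‖ ^ 2 : ℝ) : EReal)
            ≤ ((f x - 1 / (2 * r) * ‖gradient f x‖ ^ 2 : ℝ) : EReal)
              + ((r / 2 * ‖y₀ - x‖ ^ 2 : ℝ) : EReal) := add_le_add_left hsle _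
          _ = ((f x : ℝ) : EReal) := by
              rw [hnorm, ← EReal.coe_add]
              norm_num
  · -- converse
    rintro ⟨g, ⟨_, hbot⟩, _, _, henv⟩
    have hdes : ∀ x y : Euc n, f y ≤ f x + ⟪gradient f x, y - x⟫ + r / 2 * ‖y - x‖ ^ 2 := by
      intro x y
      have H : ∀ ε : ℝ, 0 < ε →
          f y ≤ f x + ⟪gradient f x, y - x⟫ + r / 2 * ‖y - x‖ ^ 2
            + (ε + Real.sqrt (2 * r * ε) * ‖y - x‖) := by
        intro ε hε
        -- find near-minimizer w
        have hlt : (⨅ y : Euc n, g y + ((r / 2 * ‖y - x‖ ^ 2 : ℝ) : EReal))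
            < ((f x + ε : ℝ) : EReal) := by
          have hx := henv x
          unfold moreauEnv at hx
          rw [← hx]
          exact_mod_cast (by linarith : f x < f x + ε)
        obtain ⟨w, hw⟩ := iInf_lt_iff.1 hlt
        have hwt : g w ≠ ⊤ := by
          intro ht
          rw [ht] at hw
          rw [EReal.top_add_of_ne_bot (EReal.coe_ne_bot _)] at hw
          exact (not_top_lt hw)
        obtain ⟨c, hc⟩ : ∃ c : ℝ, g w = (c : EReal) := by
          lift g w to ℝ using ⟨hwt, hbot w⟩ with c hc
          exact ⟨c, rfl⟩
        rw [hc, ← EReal.coe_add] at hw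
        have hwlt : c + r / 2 * ‖w - x‖ ^ 2 < f x + ε := by exact_mod_cast hw
        have hupper : ∀ z : Euc n, f z ≤ c + r / 2 * ‖w - z‖ ^ 2 := by
          intro z
          have h1 : ((f z : ℝ) : EReal) ≤ g w + ((r / 2 * ‖w - z‖ ^ 2 : ℝ) : EReal) := by
            have hz := henv z
            unfold moreauEnv at hz
            rw [hz]
            exact iInf_le (fun y => g y + ((r / 2 * ‖y - z‖ ^ 2 : ℝ) : EReal)) w
          rw [hc, ← EReal.coe_add] at h1
          exact_mod_cast h1
        set u := gradient f x with hu
        set G := r • (x - w) - u with hG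
        set δ := c + r / 2 * ‖w - x‖ ^ 2 - f x with hδ
        have hδ0 : 0 ≤ δ := by
          have := hupper x
          rw [hδ]; linarith
        have hδε : δ < ε := by rw [hδ]; linarith
        -- key expansion: for all z
        have key : ∀ z : Euc n, 0 ≤ δ + ⟪G, z - x⟫ + r / 2 * ‖z - x‖ ^ 2 := by
          intro z
          have h1 := hupper z
          have h2 := hsub x z
          have hexp : ‖w - z‖ ^ 2 = ‖w - x‖ ^ 2 + 2 * ⟪w - x, x - z⟫ + ‖x - z‖ ^ 2 := by
            rw [show w - z = (w - x) + (x - z) by abel, norm_add_sq_real]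
          have hGin : ⟪G, z - x⟫ = r * ⟪w - x, x - z⟫ - ⟪u, z - x⟫ := by
            rw [hG, inner_sub_left, real_inner_smul_left]
            have : ⟪x - w, z - x⟫ = ⟪w - x, x - z⟫ := by
              rw [show x - w = -(w - x) by abel, show z - x = -(x - z) by abel]
              rw [inner_neg_neg]
            rw [this]
          have hnn : ‖z - x‖ ^ 2 = ‖x - z‖ ^ 2 := by rw [norm_sub_rev]
          rw [hGin, hnn]
          rw [hexp] at h1
          rw [hδ]
          linarith
        -- bound on G
        have hGbound : ‖G‖ ^ 2 ≤ 2 * r * ε := by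
          have h := key (x - (1 / r) • G)
          have e1 : (x - (1 / r) • G) - x = -((1 / r) • G) := by abel
          rw [e1, inner_neg_right, real_inner_smul_right, norm_neg, norm_smul,
            Real.norm_eq_abs, abs_of_pos (by positivity : (0:ℝ) < 1/r),
            real_inner_self_eq_norm_sq] at h
          have hq : r / 2 * (1 / r * ‖G‖) ^ 2 = 1 / (2 * r) * ‖G‖ ^ 2 := by
            field_simp
          rw [hq] at h
          have h2r : 1 / r * ‖G‖ ^ 2 = 2 * (1 / (2 * r) * ‖G‖ ^ 2) := by ring
          have : 1 / (2 * r) * ‖G‖ ^ 2 ≤ δ := by linarith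
          have h3 : ‖G‖ ^ 2 ≤ 2 * r * δ := by
            rw [div_mul_eq_mul_div, one_mul, div_le_iff₀ (by positivity : (0:ℝ) < 2 * r)] at this
            linarith [this]
          nlinarith [h3, hδε, hr]
        have hGn : ‖G‖ ≤ Real.sqrt (2 * r * ε) := by
          rw [show ‖G‖ = Real.sqrt (‖G‖ ^ 2) by rw [Real.sqrt_sq (norm_nonneg G)]]
          exact Real.sqrt_le_sqrt hGbound
        -- final estimate
        have h1 := key y
        have hGy : ⟪G, y - x⟫ ≤ Real.sqrt (2 * r * ε) * ‖y - x‖ := by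
          calc ⟪G, y - x⟫ ≤ ‖G‖ * ‖y - x‖ := real_inner_le_norm _ _
            _ ≤ Real.sqrt (2 * r * ε) * ‖y - x‖ :=
                mul_le_mul_of_nonneg_right hGn (norm_nonneg _)
        -- f y ≤ c + r/2 ‖w-y‖² = f x + δ + ⟪r(x-w), y-x⟫ + r/2‖y-x‖²
        have h2 := hupper y
        have hexp : ‖w - y‖ ^ 2 = ‖w - x‖ ^ 2 + 2 * ⟪w - x, x - y⟫ + ‖x - y‖ ^ 2 := by
          rw [show w - y = (w - x) + (x - y) by abel, norm_add_sq_real]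
        have hGin : ⟪G, y - x⟫ = r * ⟪w - x, x - y⟫ - ⟪u, y - x⟫ := by
          rw [hG, inner_sub_left, real_inner_smul_left]
          have : ⟪x - w, y - x⟫ = ⟪w - x, x - y⟫ := by
            rw [show x - w = -(w - x) by abel, show y - x = -(x - y) by abel, inner_neg_neg]
          rw [this]
        have hnn : ‖y - x‖ ^ 2 = ‖x - y‖ ^ 2 := by rw [norm_sub_rev]
        rw [hexp] at h2
        rw [hnn]
        have hδdef : c + r / 2 * ‖w - x‖ ^ 2 = f x + δ := by rw [hδ]; ring
        linarith [hGy, hGin, hδε]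
      -- take the limit ε → 0⁺
      have htend : Filter.Tendsto
          (fun ε : ℝ => f x + ⟪gradient f x, y - x⟫ + r / 2 * ‖y - x‖ ^ 2
            + (ε + Real.sqrt (2 * r * ε) * ‖y - x‖)) (nhdsWithin 0 (Set.Ioi 0))
          (nhds (f x + ⟪gradient f x, y - x⟫ + r / 2 * ‖y - x‖ ^ 2)) := by
        have hcont : Continuous (fun ε : ℝ => f x + ⟪gradient f x, y - x⟫
            + r / 2 * ‖y - x‖ ^ 2 + (ε + Real.sqrt (2 * r * ε) * ‖y - x‖)) := by
          apply continuous_const.add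
          exact continuous_id.add ((Real.continuous_sqrt.comp
            (continuous_const.mul continuous_id)).mul continuous_const)
        have h00 := hcont.tendsto 0
        simp only [mul_zero, Real.sqrt_zero, zero_mul, add_zero, zero_add] at h00
        exact h00.mono_left nhdsWithin_le_nhds
      refine ge_of_tendsto htend ?_
      filter_upwards [self_mem_nhdsWithin] with ε hε
      exact H ε hε
    exact lip_of_coco f r hr (coco f r hr hsub hdes)
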